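/- Simple regret is controlled by immediate simple regrets over the remaining horizon (deterministic core of the paper's Lemma D.5): for a finite-horizon MDP and any policy ψ, for every state s and timestep t ∈ {0,…,H}, reg(s,t,ψ) ≤ Σ_{i=t}^{H} max_{s'∈S} reg_I(s',i,ψ). -/
import Mathlib


open Finset

/-- A finite-horizon MDP with state space `S`, action space `A`, transition
function `p`, reward function `R`, and horizon `H`. -/
structure FinMDP (S A : Type) [Fintype S] [Fintype A] : Type where
  p : S → A → S → ℝ
  p_nonneg : ∀ s a s', 0 ≤ p s a s'
  p_sum : ∀ s a, ∑ s', p s a s' = 1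
  R : S → A → ℝ
  H : ℕ

variable {S A : Type} [Fintype S] [Fintype A]

/-- `π t s` is a probability distribution on actions for every timestep `t` and state `s`. -/
def IsPolicy (π : ℕ → S → A → ℝ) : Prop :=
  ∀ t s, (∀ a, 0 ≤ π t s a) ∧ ∑ a, π t s a = 1

/-- Shannon entropy of a distribution on a finite set (note `Real.log 0 = 0`). -/
noncomputable def shannonEntropy (ρ : A → ℝ) : ℝ :=
  -∑ a, ρ a * Real.log (ρ a)

/-- Value recursion indexed by the number `r` of remaining steps: at `r + 1` remaining
steps the current timestep is `H - r`. -/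
noncomputable def Vrec (M : FinMDP S A) (π : ℕ → S → A → ℝ) : ℕ → S → ℝ
  | 0, _ => 0
  | r + 1, s =>
      ∑ a, π (M.H - r) s a * (M.R s a + ∑ s', M.p s a s' * Vrec M π r s')

/-- `Vpi M π t s = V^π(s,t)`: value of policy `π` at state `s` and timestep `t`. -/
noncomputable def Vpi (M : FinMDP S A) (π : ℕ → S → A → ℝ) (t : ℕ) (s : S) : ℝ :=
  Vrec M π (M.H + 1 - t) s

/-- `Qpi M π t s a = Q^π(s,a,t)`. -/
noncomputable def Qpi (M : FinMDP S A) (π : ℕ → S → A → ℝ) (t : ℕ) (s : S) (a : A) : ℝ :=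
  M.R s a + ∑ s', M.p s a s' * Vpi M π (t + 1) s'

/-- Optimal value `V*(s,t) = sup_π V^π(s,t)`. -/
noncomputable def Vstar (M : FinMDP S A) (t : ℕ) (s : S) : ℝ :=
  ⨆ π : {π : ℕ → S → A → ℝ // IsPolicy π}, Vpi M π.1 t s

/-- Optimal Q-value `Q*(s,a,t)`. -/
noncomputable def Qstar (M : FinMDP S A) (t : ℕ) (s : S) (a : A) : ℝ :=
  M.R s a + ∑ s', M.p s a s' * Vstar M (t + 1) s'

/-- Soft value recursion with temperature `α`. -/
noncomputable def VrecSft (M : FinMDP S A) (α : ℝ) (π : ℕ → S → A → ℝ) : ℕ → S → ℝ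
  | 0, _ => 0
  | r + 1, s =>
      (∑ a, π (M.H - r) s a * (M.R s a + ∑ s', M.p s a s' * VrecSft M α π r s'))
        + α * shannonEntropy (π (M.H - r) s)

/-- `VpiSft M α π t s = V^π_sft(s,t)`. -/
noncomputable def VpiSft (M : FinMDP S A) (α : ℝ) (π : ℕ → S → A → ℝ) (t : ℕ) (s : S) : ℝ :=
  VrecSft M α π (M.H + 1 - t) s

/-- `QpiSft M α π t s a = Q^π_sft(s,a,t)`. -/
noncomputable def QpiSft (M : FinMDP S A) (α : ℝ) (π : ℕ → S → A → ℝ) (t : ℕ) (s : S) (a : A) : ℝ :=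
  M.R s a + ∑ s', M.p s a s' * VpiSft M α π (t + 1) s'

/-- Optimal soft value `V*_sft(s,t) = sup_π V^π_sft(s,t)`. -/
noncomputable def VstarSft (M : FinMDP S A) (α : ℝ) (t : ℕ) (s : S) : ℝ :=
  ⨆ π : {π : ℕ → S → A → ℝ // IsPolicy π}, VpiSft M α π.1 t s

/-- Optimal soft Q-value `Q*_sft(s,a,t)`. -/
noncomputable def QstarSft (M : FinMDP S A) (α : ℝ) (t : ℕ) (s : S) (a : A) : ℝ :=
  M.R s a + ∑ s', M.p s a s' * VstarSft M α (t + 1) s'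

/-- Cumulative expected entropy recursion. -/
noncomputable def hrec (M : FinMDP S A) (π : ℕ → S → A → ℝ) : ℕ → S → ℝ
  | 0, _ => 0
  | r + 1, s =>
      shannonEntropy (π (M.H - r) s)
        + ∑ a, π (M.H - r) s a * ∑ s', M.p s a s' * hrec M π r s'

/-- `hpi M π t s = h^π(s,t)`: cumulative expected entropy of policy `π` from `(s,t)`. -/
noncomputable def hpi (M : FinMDP S A) (π : ℕ → S → A → ℝ) (t : ℕ) (s : S) : ℝ :=
  hrec M π (M.H + 1 - t) s

/-- Simple regret of policy `ψ` at `(s,t)`. -/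
noncomputable def reg (M : FinMDP S A) (ψ : ℕ → S → A → ℝ) (t : ℕ) (s : S) : ℝ :=
  Vstar M t s - Vpi M ψ t s

/-- Immediate simple regret of policy `ψ` at `(s,t)`. -/
noncomputable def regI (M : FinMDP S A) (ψ : ℕ → S → A → ℝ) (t : ℕ) (s : S) : ℝ :=
  Vstar M t s - ∑ a, ψ t s a * Qstar M t s a

section Aux

variable {S A : Type} [Fintype S] [Fintype A]

/-- Convex-combination bound. -/
lemma combo_le {ι : Type} [Fintype ι] {w f : ι → ℝ} {B : ℝ}
    (hw : ∀ i, 0 ≤ w i) (hs : ∑ i, w i = 1) (hf : ∀ i, f i ≤ B) :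
    ∑ i, w i * f i ≤ B := by
  calc ∑ i, w i * f i ≤ ∑ i, w i * B := by
        exact Finset.sum_le_sum fun i _ => mul_le_mul_of_nonneg_left (hf i) (hw i)
    _ = B := by rw [← Finset.sum_mul, hs, one_mul]

instance instNonemptyPolicy [Nonempty A] :
    Nonempty {π : ℕ → S → A → ℝ // IsPolicy π} := by
  refine ⟨⟨fun _ _ _ => (Fintype.card A : ℝ)⁻¹, fun t s => ⟨fun a => by positivity, ?_⟩⟩⟩
  rw [Finset.sum_const, Finset.card_univ, nsmul_eq_mul]
  exact mul_inv_cancel₀ (by exact_mod_cast Fintype.card_ne_zero)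

/-- Uniform bound on `Vrec`. -/
lemma Vrec_le [Nonempty S] [Nonempty A] (M : FinMDP S A) {π : ℕ → S → A → ℝ}
    (hπ : IsPolicy π) (r : ℕ) (s : S) :
    Vrec M π r s ≤ r * (Finset.univ.sup' (Finset.univ_nonempty) fun p : S × A => M.R p.1 p.2) := by
  induction r generalizing s with
  | zero => simp [Vrec]
  | succ r ih =>
    set C := Finset.univ.sup' (Finset.univ_nonempty) fun p : S × A => M.R p.1 p.2 with hC
    show Vrec M π (r+1) s ≤ (r+1 : ℕ) * C
    rw [Vrec]
    have h1 : ∀ a, M.R s a + ∑ s', M.p s a s' * Vrec M π r s' ≤ C + r * C := by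
      intro a
      have hR : M.R s a ≤ C := Finset.le_sup' (f := fun p : S × A => M.R p.1 p.2)
        (b := (s, a)) (Finset.mem_univ _)
      have h2 : ∑ s', M.p s a s' * Vrec M π r s' ≤ (r : ℝ) * C :=
        combo_le (M.p_nonneg s a) (M.p_sum s a) (fun s' => ih s')
      linarith
    have := combo_le (w := π (M.H - r) s)
      (f := fun a => M.R s a + ∑ s', M.p s a s' * Vrec M π r s')
      ((hπ _ s).1) ((hπ _ s).2) h1
    push_cast
    linarith

lemma Vpi_le_Vstar [Nonempty S] [Nonempty A] (M : FinMDP S A) {π : ℕ → S → A → ℝ}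
    (hπ : IsPolicy π) (t : ℕ) (s : S) : Vpi M π t s ≤ Vstar M t s := by
  have hb : BddAbove (Set.range fun π : {π : ℕ → S → A → ℝ // IsPolicy π} => Vpi M π.1 t s) := by
    refine ⟨(M.H + 1 - t : ℕ) * (Finset.univ.sup' (Finset.univ_nonempty)
      fun p : S × A => M.R p.1 p.2), ?_⟩
    rintro x ⟨π', rfl⟩
    exact Vrec_le M π'.2 _ s
  exact le_ciSup hb ⟨π, hπ⟩

lemma Vstar_end [Nonempty S] [Nonempty A] (M : FinMDP S A) (s : S) :
    Vstar M (M.H + 1) s = 0 := by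
  have : ∀ π : {π : ℕ → S → A → ℝ // IsPolicy π}, Vpi M π.1 (M.H + 1) s = 0 := by
    intro π; simp [Vpi, Vrec]
  simp only [Vstar, this, ciSup_const]

lemma Vpi_succ (M : FinMDP S A) (π : ℕ → S → A → ℝ) {t : ℕ} (ht : t ≤ M.H) (s : S) :
    Vpi M π t s = ∑ a, π t s a * (M.R s a + ∑ s', M.p s a s' * Vpi M π (t+1) s') := by
  have h1 : M.H + 1 - t = (M.H - t) + 1 := by omega
  have h2 : M.H - (M.H - t) = t := by omega
  have h3 : M.H + 1 - (t + 1) = M.H - t := by omega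
  rw [Vpi, h1, Vrec, h2]
  simp only [Vpi, h3]

lemma reg_step [Nonempty S] [Nonempty A] (M : FinMDP S A) (ψ : ℕ → S → A → ℝ)
    (hψ : IsPolicy ψ) {t : ℕ} (ht : t ≤ M.H) (s : S) :
    reg M ψ t s = regI M ψ t s + ∑ a, ψ t s a * ∑ s', M.p s a s' * reg M ψ (t+1) s' := by
  have hkey : ∀ a, ψ t s a * ∑ s', M.p s a s' * reg M ψ (t+1) s'
      = ψ t s a * Qstar M t s a
        - ψ t s a * (M.R s a + ∑ s', M.p s a s' * Vpi M ψ (t+1) s') := by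
    intro a
    simp only [reg, Qstar, mul_sub, Finset.sum_sub_distrib]
    ring
  rw [reg, regI, Vpi_succ M ψ ht s]
  rw [Finset.sum_congr rfl (fun a _ => hkey a), Finset.sum_sub_distrib]
  ring

lemma regI_le_sup [Nonempty S] [Nonempty A] (M : FinMDP S A) (ψ : ℕ → S → A → ℝ)
    (t : ℕ) (s : S) : regI M ψ t s ≤ ⨆ s' : S, regI M ψ t s' :=
  le_ciSup (Set.Finite.bddAbove (Set.finite_range _)) s

end Aux

/-- simple regret is controlled by immediate simple regrets over the
remaining horizon: for any policy ψ, state s and timestep t ∈ {0,…,H},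
`reg(s,t,ψ) ≤ Σ_{i=t}^{H} max_{s'∈S} reg_I(s',i,ψ)`. -/
theorem simple_regret_le_sum_immediate {S A : Type}
    [Fintype S] [Nonempty S] [Fintype A] [Nonempty A]
    (M : FinMDP S A) (ψ : ℕ → S → A → ℝ) (hψ : IsPolicy ψ)
    (s : S) (t : ℕ) (ht : t ≤ M.H) :
    reg M ψ t s ≤ ∑ i ∈ Finset.Icc t M.H, ⨆ s' : S, regI M ψ i s' := by
  suffices key : ∀ d t, t ≤ M.H → M.H - t = d → ∀ s : S,
      reg M ψ t s ≤ ∑ i ∈ Finset.Icc t M.H, ⨆ s' : S, regI M ψ i s' from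
    key _ t ht rfl s
  intro d
  induction d with
  | zero =>
    intro t ht hd s
    have htH : t = M.H := by omega
    subst htH
    have hend : ∀ s', reg M ψ (M.H + 1) s' = 0 := by
      intro s'
      simp [reg, Vstar_end, Vpi, Vrec]
    rw [reg_step M ψ hψ le_rfl s]
    simp only [hend, mul_zero, Finset.mul_sum]
    simp only [Finset.sum_const_zero, mul_zero, Finset.sum_const_zero, add_zero]
    rw [Finset.Icc_self, Finset.sum_singleton]
    exact regI_le_sup M ψ M.H s
  | succ d ih =>
    intro t ht hd s
    have ht1 : t + 1 ≤ M.H := by omega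
    have hd : M.H - (t + 1) = d := by omega
    have hrest : ∀ s', reg M ψ (t+1) s' ≤ ∑ i ∈ Finset.Icc (t+1) M.H, ⨆ s'' : S, regI M ψ i s'' :=
      fun s' => ih (t+1) ht1 hd s'
    have hsplit : ∑ i ∈ Finset.Icc t M.H, ⨆ s' : S, regI M ψ i s'
        = (⨆ s' : S, regI M ψ t s') + ∑ i ∈ Finset.Icc (t+1) M.H, ⨆ s' : S, regI M ψ i s' := by
      have hins : Finset.Icc t M.H = insert t (Finset.Icc (t+1) M.H) := by
        ext x; simp only [Finset.mem_Icc, Finset.mem_insert]; omega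
      rw [hins, Finset.sum_insert (by simp)]
    rw [reg_step M ψ hψ ht s, hsplit]
    have h2 : ∑ a, ψ t s a * ∑ s', M.p s a s' * reg M ψ (t+1) s'
        ≤ ∑ i ∈ Finset.Icc (t+1) M.H, ⨆ s' : S, regI M ψ i s' := by
      refine combo_le (hψ t s).1 (hψ t s).2 fun a => ?_
      exact combo_le (M.p_nonneg s a) (M.p_sum s a) hrest
    have h1 := regI_le_sup M ψ t s
    linarith
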